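/- Let V be an n-dimensional vector space, A an endomorphism with cyclic vector e, and let h be an alternating (skew-symmetric) bilinear form on V such that h(u, Av) + h(v, Au) = 0 for all u, v ∈ V. Then h = 0. -/

import Mathlib

/-- If `e` is cyclic for `A` and `h` is a skew-symmetric bilinear form with
`h u (A v) + h v (A u) = 0` for all `u, v`, then `h = 0` (char `K` ≠ 2). -/
theorem stmt3 {K V : Type*} [Field K] [AddCommGroup V] [Module K V] {n : ℕ}
    (hchar : (2 : K) ≠ 0)
    (A : Module.End K V) (e : V)
    (bas : Module.Basis (Fin n) K V) (hbas : ∀ i : Fin n, bas i = (A ^ (i : ℕ)) e)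
    (h : V →ₗ[K] V →ₗ[K] K)
    (hskew : ∀ u v, h u v = - h v u)
    (hA : ∀ u v, h u (A v) + h v (A u) = 0) :
    h = 0 := by
  have step : ∀ i j : ℕ, h ((A ^ i) e) ((A ^ (j + 1)) e) = h ((A ^ (i + 1)) e) ((A ^ j) e) := by
    intro i j
    have h1 : (A ^ (j + 1)) e = A ((A ^ j) e) := by
      rw [pow_succ', Module.End.mul_apply]
    have h2 : (A ^ (i + 1)) e = A ((A ^ i) e) := by
      rw [pow_succ', Module.End.mul_apply]
    rw [h1, h2]
    have e1 := hA ((A ^ i) e) ((A ^ j) e)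
    have e2 := hskew ((A ^ j) e) (A ((A ^ i) e))
    linear_combination e1 - e2
  have shift : ∀ k i j : ℕ, h ((A ^ i) e) ((A ^ (j + k)) e) = h ((A ^ (i + k)) e) ((A ^ j) e) := by
    intro k
    induction k with
    | zero => intro i j; rfl
    | succ m ih =>
      intro i j
      have : j + (m + 1) = (j + 1) + m := by ring
      rw [this, ih i (j + 1), step (i + m) j]
      ring_nf
  have key : ∀ i j : ℕ, h ((A ^ i) e) ((A ^ j) e) = 0 := by
    have sym : ∀ i j : ℕ, i ≤ j → h ((A ^ i) e) ((A ^ j) e) = h ((A ^ j) e) ((A ^ i) e) := by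
      intro i j hij
      have hj : j = i + (j - i) := by omega
      rw [hj, shift (j - i) i i]
    have zero_le : ∀ i j : ℕ, i ≤ j → h ((A ^ i) e) ((A ^ j) e) = 0 := by
      intro i j hij
      have h1 := sym i j hij
      have h2 := hskew ((A ^ i) e) ((A ^ j) e)
      have : (2 : K) * h ((A ^ i) e) ((A ^ j) e) = 0 := by linear_combination h1 + h2
      exact (mul_eq_zero.mp this).resolve_left hchar
    intro i j
    rcases le_total i j with hij | hij
    · exact zero_le i j hij
    · rw [hskew, zero_le j i hij, neg_zero]
  refine Module.Basis.ext bas fun i => Module.Basis.ext bas fun j => ?_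
  simp [hbas, key]
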